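/- Let n ∈ (0,3), k > 0, and let g(ϱ,μ) be real-analytic in a neighborhood of (0,0) with g(0,0) = 0, ∂_ϱ g(0,0) = 0, and ∂_μ g(0,0) = 0. Suppose μ₁, μ₂ : (0,ε) → ℝ are continuously differentiable, (H^{3−n}, μ_j(H)) lies in the domain of analyticity of g, both satisfy H·μ_j'(H) − μ_j(H) = g(H^{3−n}, μ_j(H)) − (2/(3k³(3−n)))·H^{3−n} on (0,ε), and H^{−δ}·μ_j(H) → 0 as H ↓ 0 for some δ > 0, for j = 1, 2. Then there exists β ∈ ℝ such that, as H ↓ 0: μ₁(H) − μ₂(H) = βH·(1 + O(H)) if 0 < n < 2, μ₁(H) − μ₂(H) = βH·(1 + O(−H·ln H)) if n = 2, and μ₁(H) − μ₂(H) = βH·(1 + O(H^{3−n})) if 2 < n < 3. -/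

import Mathlib

open Filter Topology Set Asymptotics

/-- Partial derivative of a function of two real variables in the first variable. -/
noncomputable def pd1 (f : ℝ → ℝ → ℝ) (a b : ℝ) : ℝ := deriv (fun x => f x b) a

/-- Partial derivative of a function of two real variables in the second variable. -/
noncomputable def pd2 (f : ℝ → ℝ → ℝ) (a b : ℝ) : ℝ := deriv (fun y => f a y) b

/-- Monotone comparison: if `|f'| ≤ F'` on `[a,b]` then `|f b - f a| ≤ F b - F a`. -/
lemma key_int {f F f' F' : ℝ → ℝ} {a b : ℝ} (hab : a ≤ b)
    (hf : ∀ s ∈ Icc a b, HasDerivAt f (f' s) s)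
    (hF : ∀ s ∈ Icc a b, HasDerivAt F (F' s) s)
    (hbd : ∀ s ∈ Icc a b, |f' s| ≤ F' s) :
    |f b - f a| ≤ F b - F a := by
  have hmem : a ∈ Icc a b := ⟨le_rfl, hab⟩
  have hmem' : b ∈ Icc a b := ⟨hab, le_rfl⟩
  have key : ∀ σ : ℝ, σ = 1 ∨ σ = -1 →
      F a + σ * f a ≤ F b + σ * f b := by
    intro σ hσ
    have hmono : MonotoneOn (fun s => F s + σ * f s) (Icc a b) := by
      apply monotoneOn_of_deriv_nonneg (convex_Icc a b)
      · exact fun s hs => ((hF s hs).add ((hf s hs).const_mul σ)).continuousAt.continuousWithinAt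
      · intro s hs
        rw [interior_Icc] at hs
        exact ((hF s (Ioo_subset_Icc_self hs)).add
          ((hf s (Ioo_subset_Icc_self hs)).const_mul σ)).differentiableAt.differentiableWithinAt
      · intro s hs
        rw [interior_Icc] at hs
        have hs' := Ioo_subset_Icc_self hs
        rw [show deriv (fun s => F s + σ * f s) s = F' s + σ * f' s from
          ((hF s hs').add ((hf s hs').const_mul σ)).deriv]
        have h1 := hbd s hs'
        have h2 : |σ * f' s| ≤ F' s := by
          rcases hσ with h | h <;> simp [h, abs_neg, h1]
        have := neg_abs_le (σ * f' s)
        linarith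
    exact hmono hmem hmem' hab
  have h1 := key 1 (Or.inl rfl)
  have h2 := key (-1) (Or.inr rfl)
  rw [abs_le]
  constructor <;> nlinarith

/-- Gronwall-type estimate via the square trick: if `|v'| ≤ φ' * |v|` with `φ' ≥ 0` on `[a,b]`
then `|v a| ≤ |v b| * exp (φ b - φ a)`. -/
lemma grw {v φ v' φ' : ℝ → ℝ} {a b : ℝ} (hab : a ≤ b)
    (hv : ∀ s ∈ Icc a b, HasDerivAt v (v' s) s)
    (hφ : ∀ s ∈ Icc a b, HasDerivAt φ (φ' s) s)
    (hbd : ∀ s ∈ Icc a b, |v' s| ≤ φ' s * |v s|) :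
    |v a| ≤ |v b| * Real.exp (φ b - φ a) := by
  have hq : ∀ s ∈ Icc a b, HasDerivAt (fun s => (v s) ^ 2 * Real.exp (2 * φ s))
      ((2 * v s ^ 1 * v' s) * Real.exp (2 * φ s)
        + (v s) ^ 2 * (Real.exp (2 * φ s) * (2 * φ' s))) s := by
    intro s hs
    exact ((hv s hs).pow 2).mul (((hφ s hs).const_mul 2).exp)
  have hmono : MonotoneOn (fun s => (v s) ^ 2 * Real.exp (2 * φ s)) (Icc a b) := by
    apply monotoneOn_of_deriv_nonneg (convex_Icc a b)
    · exact fun s hs => (hq s hs).continuousAt.continuousWithinAt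
    · intro s hs
      rw [interior_Icc] at hs
      exact (hq s (Ioo_subset_Icc_self hs)).differentiableAt.differentiableWithinAt
    · intro s hs
      rw [interior_Icc] at hs
      have hs' := Ioo_subset_Icc_self hs
      rw [(hq s hs').deriv]
      have h1 := hbd s hs'
      have h2 : v s * v' s ≥ -(φ' s * (v s) ^ 2) := by
        have := neg_abs_le (v s * v' s)
        have habs : |v s * v' s| ≤ φ' s * (v s) ^ 2 := by
          rw [abs_mul]
          calc |v s| * |v' s| ≤ |v s| * (φ' s * |v s|) := by
                exact mul_le_mul_of_nonneg_left h1 (abs_nonneg _)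
            _ = φ' s * (v s) ^ 2 := by rw [← sq_abs (v s)]; ring
        linarith [neg_abs_le (v s * v' s)]
      have hexp := Real.exp_pos (2 * φ s)
      nlinarith
  have hmm := hmono ⟨le_rfl, hab⟩ ⟨hab, le_rfl⟩ hab
  -- (v a)^2 * e^{2φa} ≤ (v b)^2 * e^{2φb}
  have h3 : (v a) ^ 2 ≤ (|v b| * Real.exp (φ b - φ a)) ^ 2 := by
    have e1 : (|v b| * Real.exp (φ b - φ a)) ^ 2
        = (v b) ^ 2 * Real.exp (2 * φ b) / Real.exp (2 * φ a) := by
      rw [mul_pow, sq_abs, ← Real.exp_nat_mul]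
      rw [div_eq_mul_inv, ← Real.exp_neg, mul_assoc, ← Real.exp_add]
      ring_nf
    rw [e1, le_div_iff₀ (Real.exp_pos _)]
    exact hmm
  calc |v a| = |v a| := rfl
    _ ≤ |v b| * Real.exp (φ b - φ a) := by
        have hnn : (0:ℝ) ≤ |v b| * Real.exp (φ b - φ a) :=
          mul_nonneg (abs_nonneg _) (Real.exp_pos _).le
        nlinarith [abs_nonneg (v a), sq_abs (v a)]

lemma g_bounds (g : ℝ → ℝ → ℝ) (U : Set (ℝ × ℝ)) (hU : U ∈ 𝓝 ((0, 0) : ℝ × ℝ))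
    (hanal : ∀ x ∈ U, AnalyticAt ℝ (fun y : ℝ × ℝ => g y.1 y.2) x)
    (hg0 : g 0 0 = 0) (hg1 : pd1 g 0 0 = 0) (hg2 : pd2 g 0 0 = 0) :
    ∃ K > (0:ℝ), ∃ r > (0:ℝ),
      (∀ x y : ℝ, |x| ≤ r → |y| ≤ r → |g x y| ≤ K * (|x| + |y|) ^ 2) ∧
      (∀ x y y' : ℝ, |x| ≤ r → |y| ≤ r → |y'| ≤ r →
        |g x y - g x y'| ≤ K * (|x| + |y| + |y'|) * |y - y'|) := by
  set G : ℝ × ℝ → ℝ := fun p => g p.1 p.2 with hGdef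
  rw [Prod.mk_zero_zero] at hU
  have h00 : (0 : ℝ × ℝ) ∈ U := mem_of_mem_nhds hU
  have hG : AnalyticAt ℝ G 0 := hanal _ h00
  have hG2 : ContDiffAt ℝ 2 G 0 := hG.contDiffAt
  have hf1 : ContDiffAt ℝ 1 (fderiv ℝ G) 0 := hG2.fderiv_right (by norm_num)
  obtain ⟨K₀, t, ht, hlip⟩ := hf1.exists_lipschitzOnWith
  have hd : DifferentiableAt ℝ G 0 := hG.differentiableAt
  have e1 : fderiv ℝ G 0 (1,0) = 0 := by
    have hline : HasDerivAt (fun x : ℝ => ((x, 0) : ℝ × ℝ)) ((1,0) : ℝ × ℝ) 0 :=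
      (hasDerivAt_id (0:ℝ)).prodMk (hasDerivAt_const (0:ℝ) (0:ℝ))
    have hc0 := hd.hasFDerivAt.comp_hasDerivAt_of_eq (0:ℝ) hline (by rfl)
    have hc : HasDerivAt (fun x : ℝ => g x 0) (fderiv ℝ G 0 ((1,0) : ℝ × ℝ)) 0 := hc0
    have : deriv (fun x : ℝ => g x 0) 0 = fderiv ℝ G 0 ((1,0) : ℝ × ℝ) := hc.deriv
    rw [← this]; exact hg1
  have e2 : fderiv ℝ G 0 (0,1) = 0 := by
    have hline : HasDerivAt (fun y : ℝ => ((0, y) : ℝ × ℝ)) ((0,1) : ℝ × ℝ) 0 :=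
      (hasDerivAt_const (0:ℝ) (0:ℝ)).prodMk (hasDerivAt_id (0:ℝ))
    have hc0 := hd.hasFDerivAt.comp_hasDerivAt_of_eq (0:ℝ) hline (by rfl)
    have hc : HasDerivAt (fun y : ℝ => g 0 y) (fderiv ℝ G 0 ((0,1) : ℝ × ℝ)) 0 := hc0
    have : deriv (fun y : ℝ => g 0 y) 0 = fderiv ℝ G 0 ((0,1) : ℝ × ℝ) := hc.deriv
    rw [← this]; exact hg2
  have hfd0 : fderiv ℝ G 0 = 0 := by
    apply ContinuousLinearMap.ext
    intro p
    have hp : p = p.1 • ((1,0) : ℝ × ℝ) + p.2 • ((0,1) : ℝ × ℝ) := by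
      simp [Prod.ext_iff]
    rw [hp, map_add, map_smul, map_smul, e1, e2]
    simp
  obtain ⟨ρ, hρ, hball⟩ := Metric.mem_nhds_iff.1 (inter_mem hU ht)
  set r : ℝ := ρ / 2 with hrdef
  have hr : 0 < r := by positivity
  have hsub : Metric.closedBall (0 : ℝ × ℝ) r ⊆ U ∩ t :=
    subset_trans (Metric.closedBall_subset_ball (by linarith)) hball
  set K : ℝ := max (K₀ : ℝ) 1 with hKdef
  have hK : (0:ℝ) < K := lt_of_lt_of_le one_pos (le_max_right _ _)
  have hK₀K : (K₀ : ℝ) ≤ K := le_max_left _ _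
  have hlin : ∀ q ∈ Metric.closedBall (0 : ℝ × ℝ) r, ‖fderiv ℝ G q‖ ≤ K * ‖q‖ := by
    intro q hq
    have hq' : q ∈ t := (hsub hq).2
    have h0' : (0 : ℝ × ℝ) ∈ t := (hsub (Metric.mem_closedBall_self hr.le)).2
    have := hlip.dist_le_mul q hq' (0 : ℝ × ℝ) h0'
    rw [dist_eq_norm, dist_eq_norm, hfd0, sub_zero, sub_zero] at this
    calc ‖fderiv ℝ G q‖ ≤ (K₀ : ℝ) * ‖q‖ := this
      _ ≤ K * ‖q‖ := mul_le_mul_of_nonneg_right hK₀K (norm_nonneg _)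
  have hdiffb : ∀ q ∈ Metric.closedBall (0 : ℝ × ℝ) r, DifferentiableAt ℝ G q :=
    fun q hq => (hanal q ((hsub hq).1)).differentiableAt
  have hnorm : ∀ x y : ℝ, ‖((x, y) : ℝ × ℝ)‖ = max |x| |y| := by
    intro x y; rw [Prod.norm_def]; simp [Real.norm_eq_abs]
  refine ⟨K, hK, r, hr, ?_, ?_⟩
  · -- quadratic bound
    intro x y hx hy
    set p : ℝ × ℝ := (x, y) with hpdef
    have hpn : ‖p‖ ≤ r := by rw [hnorm]; exact max_le hx hy
    have hpmem : ∀ q ∈ Metric.closedBall (0 : ℝ × ℝ) ‖p‖,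
        q ∈ Metric.closedBall (0 : ℝ × ℝ) r :=
      fun q hq => Metric.closedBall_subset_closedBall hpn hq
    have hps : p ∈ Metric.closedBall (0 : ℝ × ℝ) ‖p‖ := by
      rw [Metric.mem_closedBall, dist_zero_right]
    have h0s : (0 : ℝ × ℝ) ∈ Metric.closedBall (0 : ℝ × ℝ) ‖p‖ :=
      Metric.mem_closedBall_self (norm_nonneg _)
    have key := Convex.norm_image_sub_le_of_norm_fderiv_le
      (fun q hq => hdiffb q (hpmem q hq))
      (fun q hq => by
        have hqn : ‖q‖ ≤ ‖p‖ := by rwa [Metric.mem_closedBall, dist_zero_right] at hq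
        calc ‖fderiv ℝ G q‖ ≤ K * ‖q‖ := hlin q (hpmem q hq)
          _ ≤ K * ‖p‖ := mul_le_mul_of_nonneg_left hqn hK.le)
      (convex_closedBall _ _) h0s hps
    have hG00 : G (0 : ℝ × ℝ) = 0 := hg0
    rw [hG00, sub_zero, sub_zero] at key
    have h1 : ‖p‖ ≤ |x| + |y| := by
      rw [hnorm]; exact max_le (by linarith [abs_nonneg y]) (by linarith [abs_nonneg x])
    calc |g x y| = ‖G p‖ := rfl
      _ ≤ K * ‖p‖ * ‖p‖ := key
      _ ≤ K * (|x| + |y|) ^ 2 := by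
          nlinarith [mul_le_mul h1 h1 (norm_nonneg p) (by positivity : (0:ℝ) ≤ |x| + |y|),
            norm_nonneg p, hK.le]
  · -- difference bound
    intro x y y' hx hy hy'
    set p : ℝ × ℝ := (x, y) with hpdef
    set q : ℝ × ℝ := (x, y') with hqdef
    set R : ℝ := max ‖p‖ ‖q‖ with hRdef
    have hRr : R ≤ r := max_le (by rw [hnorm]; exact max_le hx hy)
      (by rw [hnorm]; exact max_le hx hy')
    have hmem : ∀ u ∈ Metric.closedBall (0 : ℝ × ℝ) R,
        u ∈ Metric.closedBall (0 : ℝ × ℝ) r :=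
      fun u hu => Metric.closedBall_subset_closedBall hRr hu
    have hps : p ∈ Metric.closedBall (0 : ℝ × ℝ) R := by
      rw [Metric.mem_closedBall, dist_zero_right]; exact le_max_left _ _
    have hqs : q ∈ Metric.closedBall (0 : ℝ × ℝ) R := by
      rw [Metric.mem_closedBall, dist_zero_right]; exact le_max_right _ _
    have key := Convex.norm_image_sub_le_of_norm_fderiv_le
      (fun u hu => hdiffb u (hmem u hu))
      (fun u hu => by
        have hun : ‖u‖ ≤ R := by rwa [Metric.mem_closedBall, dist_zero_right] at hu
        calc ‖fderiv ℝ G u‖ ≤ K * ‖u‖ := hlin u (hmem u hu)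
          _ ≤ K * R := mul_le_mul_of_nonneg_left hun hK.le)
      (convex_closedBall _ _) hqs hps
    have hsubn : ‖p - q‖ = |y - y'| := by
      have hpq : p - q = ((0, y - y') : ℝ × ℝ) := by simp [hpdef, hqdef, Prod.ext_iff]
      rw [hpq, hnorm]; simp
    rw [hsubn] at key
    have hR : R ≤ |x| + |y| + |y'| := by
      apply max_le
      · rw [hnorm]
        exact max_le (by linarith [abs_nonneg y, abs_nonneg y'])
          (by linarith [abs_nonneg x, abs_nonneg y'])
      · rw [hnorm]
        exact max_le (by linarith [abs_nonneg y, abs_nonneg y'])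
          (by linarith [abs_nonneg x, abs_nonneg y])
    calc |g x y - g x y'| = ‖G p - G q‖ := rfl
      _ ≤ K * R * |y - y'| := key
      _ ≤ K * (|x| + |y| + |y'|) * |y - y'| := by
          have h1 := abs_nonneg (y - y')
          nlinarith [mul_le_mul_of_nonneg_left hR hK.le]
set_option maxHeartbeats 2000000 in
lemma mu_est (n ε Kc : ℝ) (hn0 : 0 < n) (hn3 : n < 3) (hε : 0 < ε)
    (g : ℝ → ℝ → ℝ) (K r : ℝ) (hK : 0 < K) (hr : 0 < r)
    (hq : ∀ x y : ℝ, |x| ≤ r → |y| ≤ r → |g x y| ≤ K * (|x| + |y|) ^ 2)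
    (μ : ℝ → ℝ) (hμreg : ContDiffOn ℝ 1 μ (Set.Ioo 0 ε))
    (hode : ∀ H ∈ Set.Ioo (0:ℝ) ε,
      H * deriv μ H - μ H = g (H ^ (3 - n)) (μ H) - Kc * H ^ (3 - n))
    (hδ : ∃ δ > (0:ℝ), Tendsto (fun H => H ^ (-δ) * μ H) (𝓝[>] (0:ℝ)) (𝓝 0)) :
    ∃ Hb C : ℝ, 0 < Hb ∧ Hb < ε ∧ Hb ≤ 1 ∧ 0 < C ∧
      (n < 2 → ∀ H ∈ Set.Ioc (0:ℝ) Hb, |μ H| ≤ C * H) ∧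
      (n = 2 → ∀ H ∈ Set.Ioc (0:ℝ) Hb, |μ H| ≤ C * (H * (1 - Real.log H))) ∧
      (2 < n → ∀ H ∈ Set.Ioc (0:ℝ) Hb, |μ H| ≤ C * H ^ (3 - n)) := by
  obtain ⟨δ, hδ0, hδt⟩ := hδ
  have h3n : 0 < 3 - n := by linarith
  -- eventual facts near 0⁺
  have tendrpow : ∀ p : ℝ, 0 < p → Tendsto (fun H : ℝ => H ^ p) (𝓝[>] (0:ℝ)) (𝓝 0) := by
    intro p hp
    have h := (Real.continuousAt_rpow_const 0 p (Or.inr hp.le)).tendsto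
    rw [Real.zero_rpow (ne_of_gt hp)] at h
    exact h.mono_left nhdsWithin_le_nhds
  have ev1 : ∀ᶠ H in 𝓝[>] (0:ℝ), H ^ (3-n) ≤ r :=
    (tendrpow _ h3n).eventually (eventually_le_nhds hr)
  have ev3 : ∀ᶠ H in 𝓝[>] (0:ℝ), H ^ δ ≤ r :=
    (tendrpow _ hδ0).eventually (eventually_le_nhds hr)
  have ev2 : ∀ᶠ H in 𝓝[>] (0:ℝ), |μ H| ≤ H ^ δ := by
    have h1 : ∀ᶠ H in 𝓝[>] (0:ℝ), |H ^ (-δ)| * |μ H| < 1 := by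
      have := Metric.tendsto_nhds.mp hδt 1 one_pos
      simpa [Real.dist_eq, abs_mul] using this
    filter_upwards [h1, self_mem_nhdsWithin] with H h1 hH
    have hH0 : (0:ℝ) < H := hH
    have hpos : 0 < H ^ (-δ) := Real.rpow_pos_of_pos hH0 _
    rw [abs_of_pos hpos] at h1
    have key : H ^ δ * (H ^ (-δ) * |μ H|) = |μ H| := by
      rw [← mul_assoc, ← Real.rpow_add hH0]; simp
    calc |μ H| = H ^ δ * (H ^ (-δ) * |μ H|) := key.symm
      _ ≤ H ^ δ * 1 :=
          mul_le_mul_of_nonneg_left h1.le (Real.rpow_pos_of_pos hH0 δ).le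
      _ = H ^ δ := mul_one _
  have evε : ∀ᶠ H in 𝓝[>] (0:ℝ), H < ε ∧ H ≤ 1 := by
    have : Set.Ioo (0:ℝ) (min ε 1) ∈ 𝓝[>] (0:ℝ) :=
      Ioo_mem_nhdsGT_of_mem ⟨le_rfl, lt_min hε one_pos⟩
    filter_upwards [this] with H hH
    exact ⟨hH.2.trans_le (min_le_left _ _), (hH.2.trans_le (min_le_right _ _)).le⟩
  have hall0 : ∀ᶠ H in 𝓝[>] (0:ℝ),
      H < ε ∧ H ≤ 1 ∧ H ^ (3-n) ≤ r ∧ |μ H| ≤ H ^ δ ∧ H ^ δ ≤ r := by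
    filter_upwards [ev1, ev2, ev3, evε] with H h1 h2 h3 h4
    exact ⟨h4.1, h4.2, h1, h2, h3⟩
  obtain ⟨Hb', hHb'0, hHb'⟩ := mem_nhdsGT_iff_exists_Ioc_subset.1 hall0
  have hHb'0 : (0:ℝ) < Hb' := hHb'0
  -- properties on the interval
  have hprop : ∀ H ∈ Set.Ioc (0:ℝ) Hb',
      H < ε ∧ H ≤ 1 ∧ H ^ (3-n) ≤ r ∧ |μ H| ≤ H ^ δ ∧ H ^ δ ≤ r := fun H hH => hHb' hH
  set Hb : ℝ := Hb' with hHbdef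
  have hHb0 : 0 < Hb := hHb'0
  have hmemHb : Hb ∈ Set.Ioc (0:ℝ) Hb := ⟨hHb0, le_rfl⟩
  have hHbε : Hb < ε := (hprop Hb hmemHb).1
  have hHb1 : Hb ≤ 1 := (hprop Hb hmemHb).2.1
  have hIoo : ∀ H ∈ Set.Ioc (0:ℝ) Hb, H ∈ Set.Ioo (0:ℝ) ε :=
    fun H hH => ⟨hH.1, (hprop H hH).1⟩
  have hμd : ∀ H ∈ Set.Ioc (0:ℝ) Hb, HasDerivAt μ (deriv μ H) H := by
    intro H hH
    exact ((hμreg.differentiableOn one_ne_zero H (hIoo H hH)).differentiableAt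
      (isOpen_Ioo.mem_nhds (hIoo H hH))).hasDerivAt
  have hφd : ∀ H ∈ Set.Ioc (0:ℝ) Hb,
      HasDerivAt (fun s => μ s / s)
        ((g (H^(3-n)) (μ H) - Kc * H^(3-n)) / H^2) H := by
    intro H hH
    have h1 := (hμd H hH).div (hasDerivAt_id H) (ne_of_gt hH.1)
    have hnumeq : g (H^(3-n)) (μ H) - Kc * H^(3-n) = deriv μ H * H - μ H * 1 := by
      rw [← hode H (hIoo H hH)]; ring
    rw [hnumeq]
    exact h1
  -- numerator bound
  have hnum : ∀ a b C₁ : ℝ, 0 ≤ C₁ → 0 < a → 0 < b → b ≤ 3-n → b ≤ 2*a →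
      (∀ s ∈ Set.Ioc (0:ℝ) Hb, |μ s| ≤ C₁ * s^a) →
      ∀ s ∈ Set.Ioc (0:ℝ) Hb,
        |g (s^(3-n)) (μ s) - Kc * s^(3-n)| ≤ (K*(2 + 2*C₁^2) + |Kc|) * s^b := by
    intro a b C₁ hC₁ ha hb hb3 hb2 hμa s hs
    obtain ⟨hs0, hsb⟩ := hs
    have hs1 : s ≤ 1 := hsb.trans hHb1
    have hϱ0 : 0 < s ^ (3-n) := Real.rpow_pos_of_pos hs0 _
    have hϱr : s ^ (3-n) ≤ r := (hprop s ⟨hs0, hsb⟩).2.2.1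
    have hμr : |μ s| ≤ r := ((hprop s ⟨hs0, hsb⟩).2.2.2.1).trans ((hprop s ⟨hs0, hsb⟩).2.2.2.2)
    have hgb := hq (s^(3-n)) (μ s) (by rwa [abs_of_pos hϱ0]) hμr
    rw [abs_of_pos hϱ0] at hgb
    have hμas : |μ s| ≤ C₁ * s ^ a := hμa s ⟨hs0, hsb⟩
    have hϱb : s ^ (3-n) ≤ s ^ b := Real.rpow_le_rpow_of_exponent_ge hs0 hs1 hb3
    have hϱ1 : s ^ (3-n) ≤ 1 := Real.rpow_le_one hs0.le hs1 h3n.le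
    have hsab : s ^ a * s ^ a ≤ s ^ b := by
      rw [← Real.rpow_add hs0]
      have : b ≤ a + a := by linarith
      exact Real.rpow_le_rpow_of_exponent_ge hs0 hs1 this
    have hsa0 : (0:ℝ) < s ^ a := Real.rpow_pos_of_pos hs0 _
    have hsb0 : (0:ℝ) < s ^ b := Real.rpow_pos_of_pos hs0 _
    calc |g (s^(3-n)) (μ s) - Kc * s^(3-n)|
        ≤ |g (s^(3-n)) (μ s)| + |Kc * s^(3-n)| := abs_sub _ _
      _ ≤ K * (s^(3-n) + |μ s|)^2 + |Kc| * s^(3-n) := by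
          rw [abs_mul, abs_of_pos hϱ0]; exact add_le_add hgb le_rfl
      _ ≤ (K*(2 + 2*C₁^2) + |Kc|) * s^b := by
          have h1 : (s^(3-n) + |μ s|)^2 ≤ 2*(s^(3-n))^2 + 2*(C₁ * s^a)^2 := by
            nlinarith [sq_nonneg (s ^ (3 - n) - C₁ * s ^ a), hμas, abs_nonneg (μ s), hϱ0.le,
              mul_le_mul hμas hμas (abs_nonneg (μ s)) (by positivity : (0:ℝ) ≤ C₁ * s ^ a),
              mul_le_mul_of_nonneg_left hμas hϱ0.le]
          have h2 : (s^(3-n))^2 ≤ s^b := by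
            rw [sq]
            calc s^(3-n) * s^(3-n) ≤ 1 * (s^b) := mul_le_mul hϱ1 hϱb hϱ0.le zero_le_one
              _ = s^b := one_mul _
          have h3 : (C₁ * s^a)^2 ≤ C₁^2 * s^b := by
            have e : (C₁ * s^a)^2 = C₁^2 * (s^a * s^a) := by ring
            rw [e]
            exact mul_le_mul_of_nonneg_left hsab (by positivity)
          have h4 : |Kc| * s^(3-n) ≤ |Kc| * s^b :=
            mul_le_mul_of_nonneg_left hϱb (abs_nonneg _)
          have h5 : K * (s^(3-n) + |μ s|)^2 ≤ K * (2*(s^b) + 2*(C₁^2 * s^b)) := by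
            apply mul_le_mul_of_nonneg_left _ hK.le
            linarith
          have h6 : K * (2*(s^b) + 2*(C₁^2 * s^b)) + |Kc| * s^b
              = (K*(2 + 2*C₁^2) + |Kc|) * s^b := by ring
          linarith
    -- one bootstrap step
  have hstep : ∀ a c C₁ : ℝ, 0 ≤ C₁ → 0 < a → 0 < c → c < 1 → c ≤ 3-n → c ≤ 2*a →
      (∀ s ∈ Set.Ioc (0:ℝ) Hb, |μ s| ≤ C₁ * s^a) →
      ∃ C₂ > (0:ℝ), ∀ s ∈ Set.Ioc (0:ℝ) Hb, |μ s| ≤ C₂ * s^c := by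
    intro a c C₁ hC₁ ha hc0 hc1 hc3 hc2 hμa
    set D : ℝ := K*(2 + 2*C₁^2) + |Kc| with hDdef
    have hD : 0 < D := by positivity
    have hnb := hnum a c C₁ hC₁ ha hc0 hc3 hc2 hμa
    have hne1 : c - 1 ≠ 0 := by intro h; rw [sub_eq_zero] at h; exact absurd h (ne_of_lt hc1)
    have hne2 : (1:ℝ) - c ≠ 0 := by intro h; rw [sub_eq_zero] at h; exact absurd h.symm (ne_of_lt hc1)
    have h1c : (0:ℝ) < 1 - c := by linarith
    refine ⟨|μ Hb / Hb| + D/(1-c) + 1, by positivity, ?_⟩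
    intro H hH
    have hH1 : H ≤ 1 := hH.2.trans hHb1
    have hsub : Set.Icc H Hb ⊆ Set.Ioc (0:ℝ) Hb := fun s hs => ⟨lt_of_lt_of_le hH.1 hs.1, hs.2⟩
    have hF : ∀ s ∈ Set.Icc H Hb,
        HasDerivAt (fun s : ℝ => D/(c-1) * s^(c-1)) (D * s^(c-2)) s := by
      intro s hs
      have hs0 : 0 < s := lt_of_lt_of_le hH.1 hs.1
      have h := (Real.hasDerivAt_rpow_const
        (x := s) (p := c-1) (Or.inl (ne_of_gt hs0))).const_mul (D/(c-1))
      have he : D/(c-1) * ((c-1) * s^(c-1-1)) = D * s^(c-2) := by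
        rw [show c-1-1 = c-2 by ring]
        field_simp
      rw [he] at h
      exact h
    have hbd : ∀ s ∈ Set.Icc H Hb,
        |(g (s^(3-n)) (μ s) - Kc * s^(3-n)) / s^2| ≤ D * s^(c-2) := by
      intro s hs
      have hs0 : 0 < s := lt_of_lt_of_le hH.1 hs.1
      have h1 := hnb s (hsub hs)
      rw [abs_div, abs_of_pos (by positivity : (0:ℝ) < s^2)]
      rw [div_le_iff₀ (by positivity : (0:ℝ) < s^2)]
      have he : D * s^(c-2) * s^2 = D * s^c := by
        rw [mul_assoc, ← Real.rpow_natCast s 2, ← Real.rpow_add hs0]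
        norm_num
      rw [he]
      exact h1
    have hki := key_int hH.2 (fun s hs => hφd s (hsub hs)) hF hbd
    have hHb_pow : (0:ℝ) < Hb ^ (c-1) := Real.rpow_pos_of_pos hHb0 _
    have hH_pow : (0:ℝ) < H ^ (c-1) := Real.rpow_pos_of_pos hH.1 _
    have h4 : D/(c-1) * Hb^(c-1) - D/(c-1) * H^(c-1) ≤ D/(1-c) * H^(c-1) := by
      have e : D/(c-1) * Hb^(c-1) - D/(c-1) * H^(c-1)
          = D/(1-c) * H^(c-1) - D/(1-c) * Hb^(c-1) := by
        field_simp
        ring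
      rw [e]
      nlinarith [mul_pos (div_pos hD h1c) hHb_pow]
    have h2 : |μ H / H| ≤ |μ Hb / Hb| + D/(1-c) * H^(c-1) := by
      have h5 := abs_sub_abs_le_abs_sub (μ H / H) (μ Hb / Hb)
      have h6 : |μ H / H - μ Hb / Hb| = |μ Hb / Hb - μ H / H| := abs_sub_comm _ _
      rw [h6] at h5
      linarith [hki, h4, h5]
    have hμH : |μ H| = |μ H / H| * H := by
      rw [abs_div, abs_of_pos hH.1, div_mul_cancel₀]
      exact ne_of_gt hH.1
    have hHc : H ≤ H^c := by
      nth_rewrite 1 [← Real.rpow_one H]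
      exact Real.rpow_le_rpow_of_exponent_ge hH.1 hH1 hc1.le
    have hHc0 : (0:ℝ) < H^c := Real.rpow_pos_of_pos hH.1 _
    have hpow : H^(c-1) * H = H^c := by
      nth_rewrite 2 [← Real.rpow_one H]
      rw [← Real.rpow_add hH.1]
      norm_num
    calc |μ H| = |μ H / H| * H := hμH
      _ ≤ (|μ Hb / Hb| + D/(1-c) * H^(c-1)) * H := mul_le_mul_of_nonneg_right h2 hH.1.le
      _ = |μ Hb / Hb| * H + D/(1-c) * (H^(c-1) * H) := by ring
      _ ≤ |μ Hb / Hb| * H^c + D/(1-c) * H^c := by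
          rw [hpow]
          have := mul_le_mul_of_nonneg_left hHc (abs_nonneg (μ Hb / Hb))
          linarith
      _ ≤ (|μ Hb / Hb| + D/(1-c) + 1) * H^c := by nlinarith [hHc0]
    -- all subcritical exponents are achieved
  have hall : ∀ c : ℝ, 0 < c → c < 1 → c ≤ 3-n →
      ∃ C > (0:ℝ), ∀ s ∈ Set.Ioc (0:ℝ) Hb, |μ s| ≤ C * s^c := by
    intro c hc0 hc1 hc3
    have hind : ∀ m : ℕ, ∃ C > (0:ℝ), ∀ s ∈ Set.Ioc (0:ℝ) Hb,
        |μ s| ≤ C * s ^ (min (δ*(3/2)^m) c) := by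
      intro m
      induction m with
      | zero =>
        refine ⟨1, one_pos, fun s hs => ?_⟩
        have h1 : |μ s| ≤ s^δ := (hprop s hs).2.2.2.1
        have hs1 : s ≤ 1 := hs.2.trans hHb1
        have h2 : s^δ ≤ s^(min (δ*(3/2)^(0:ℕ)) c) := by
          apply Real.rpow_le_rpow_of_exponent_ge hs.1 hs1
          simp only [pow_zero, mul_one]
          exact min_le_left _ _
        rw [one_mul]
        exact h1.trans h2
      | succ m ih =>
        obtain ⟨C₁, hC₁, hP⟩ := ih
        have ha0 : 0 < min (δ*(3/2)^m) c := lt_min (by positivity) hc0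
        have hc'0 : 0 < min (δ*(3/2)^(m+1)) c := lt_min (by positivity) hc0
        have hc'1 : min (δ*(3/2)^(m+1)) c < 1 := lt_of_le_of_lt (min_le_right _ _) hc1
        have hc'3 : min (δ*(3/2)^(m+1)) c ≤ 3-n := le_trans (min_le_right _ _) hc3
        have hc'2a : min (δ*(3/2)^(m+1)) c ≤ 2 * min (δ*(3/2)^m) c := by
          have h32 : min (δ*(3/2)^(m+1)) c ≤ (3/2) * min (δ*(3/2)^m) c := by
            rcases le_total (δ*(3/2)^m) c with h | h
            · rw [min_eq_left h]
              calc min (δ*(3/2)^(m+1)) c ≤ δ*(3/2)^(m+1) := min_le_left _ _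
                _ = (3/2) * (δ*(3/2)^m) := by ring
            · rw [min_eq_right h]
              calc min (δ*(3/2)^(m+1)) c ≤ c := min_le_right _ _
                _ ≤ (3/2) * c := by linarith [hc0.le]
          linarith [ha0.le]
        exact hstep _ _ C₁ hC₁.le ha0 hc'0 hc'1 hc'3 hc'2a hP
    obtain ⟨m, hm⟩ := pow_unbounded_of_one_lt (c/δ) (by norm_num : (1:ℝ) < 3/2)
    have hmin : min (δ*(3/2)^m) c = c := by
      apply min_eq_right
      have := (div_lt_iff₀ hδ0).1 hm
      nlinarith
    obtain ⟨C, hC, h⟩ := hind m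
    rw [hmin] at h
    exact ⟨C, hC, h⟩
  -- final case analysis
  rcases lt_trichotomy n 2 with hn2 | hn2 | hn2
  · -- n < 2 : |μ| ≤ C H
    have h34 : (3:ℝ)/4 ≤ 3-n := by linarith
    obtain ⟨C₁, hC₁, hP⟩ := hall (3/4) (by norm_num) (by norm_num) h34
    set D : ℝ := K*(2 + 2*C₁^2) + |Kc| with hDdef
    have hD : 0 < D := by positivity
    set b : ℝ := min (3-n) (3/2) with hbdef
    have hb1 : 1 < b := lt_min (by linarith) (by norm_num)
    have hb0 : 0 < b := lt_trans one_pos hb1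
    have hb3 : b ≤ 3-n := min_le_left _ _
    have hb2 : b ≤ 2*(3/4) := by
      have := min_le_right (3-n) (3/2 : ℝ)
      linarith
    have hnb := hnum (3/4) b C₁ hC₁.le (by norm_num) hb0 hb3 hb2 hP
    have hbne : (0:ℝ) < b - 1 := by linarith
    have hHbpow : (0:ℝ) < Hb^(b-1) := Real.rpow_pos_of_pos hHb0 _
    refine ⟨Hb, |μ Hb / Hb| + D/(b-1) * Hb^(b-1) + 1, hHb0, hHbε, hHb1,
      by have := div_pos hD hbne; positivity,
      fun _ => ?_, fun h2 => by rw [h2] at hn2; exact absurd hn2 (lt_irrefl 2),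
      fun h2 => by exact absurd (lt_trans hn2 h2) (lt_irrefl n)⟩
    intro H hH
    have hH1 : H ≤ 1 := hH.2.trans hHb1
    have hsub : Set.Icc H Hb ⊆ Set.Ioc (0:ℝ) Hb := fun s hs => ⟨lt_of_lt_of_le hH.1 hs.1, hs.2⟩
    have hF : ∀ s ∈ Set.Icc H Hb,
        HasDerivAt (fun s : ℝ => D/(b-1) * s^(b-1)) (D * s^(b-2)) s := by
      intro s hs
      have hs0 : 0 < s := lt_of_lt_of_le hH.1 hs.1
      have h := (Real.hasDerivAt_rpow_const
        (x := s) (p := b-1) (Or.inl (ne_of_gt hs0))).const_mul (D/(b-1))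
      have he : D/(b-1) * ((b-1) * s^(b-1-1)) = D * s^(b-2) := by
        rw [show b-1-1 = b-2 by ring]
        field_simp
      rw [he] at h
      exact h
    have hbd : ∀ s ∈ Set.Icc H Hb,
        |(g (s^(3-n)) (μ s) - Kc * s^(3-n)) / s^2| ≤ D * s^(b-2) := by
      intro s hs
      have hs0 : 0 < s := lt_of_lt_of_le hH.1 hs.1
      have h1 := hnb s (hsub hs)
      rw [abs_div, abs_of_pos (by positivity : (0:ℝ) < s^2)]
      rw [div_le_iff₀ (by positivity : (0:ℝ) < s^2)]
      have he : D * s^(b-2) * s^2 = D * s^b := by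
        rw [mul_assoc, ← Real.rpow_natCast s 2, ← Real.rpow_add hs0]
        norm_num
      rw [he]
      exact h1
    have hki := key_int hH.2 (fun s hs => hφd s (hsub hs)) hF hbd
    have hHpow : (0:ℝ) < H^(b-1) := Real.rpow_pos_of_pos hH.1 _
    have h4 : D/(b-1) * Hb^(b-1) - D/(b-1) * H^(b-1) ≤ D/(b-1) * Hb^(b-1) := by
      nlinarith [mul_pos (div_pos hD (by linarith : (0:ℝ) < b-1)) hHpow]
    have h2 : |μ H / H| ≤ |μ Hb / Hb| + D/(b-1) * Hb^(b-1) := by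
      have h5 := abs_sub_abs_le_abs_sub (μ H / H) (μ Hb / Hb)
      have h6 : |μ H / H - μ Hb / Hb| = |μ Hb / Hb - μ H / H| := abs_sub_comm _ _
      rw [h6] at h5
      linarith [hki, h4, h5]
    have hμH : |μ H| = |μ H / H| * H := by
      rw [abs_div, abs_of_pos hH.1, div_mul_cancel₀]
      exact ne_of_gt hH.1
    calc |μ H| = |μ H / H| * H := hμH
      _ ≤ (|μ Hb / Hb| + D/(b-1) * Hb^(b-1)) * H := mul_le_mul_of_nonneg_right h2 hH.1.le
      _ ≤ (|μ Hb / Hb| + D/(b-1) * Hb^(b-1) + 1) * H := by nlinarith [hH.1]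
  · -- n = 2 : |μ| ≤ C H (1 - log H)
    have h3n1 : 3 - n = 1 := by rw [hn2]; norm_num
    obtain ⟨C₁, hC₁, hP⟩ := hall (3/4) (by norm_num) (by norm_num) (by rw [h3n1]; norm_num)
    set D : ℝ := K*(2 + 2*C₁^2) + |Kc| with hDdef
    have hD : 0 < D := by positivity
    have hnb := hnum (3/4) 1 C₁ hC₁.le (by norm_num) one_pos (by rw [h3n1]) (by norm_num) hP
    refine ⟨Hb, |μ Hb / Hb| + D + 1, hHb0, hHbε, hHb1, by positivity,
      fun h2 => by rw [hn2] at h2; exact absurd h2 (lt_irrefl 2), fun _ => ?_,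
      fun h2 => by rw [hn2] at h2; exact absurd h2 (lt_irrefl 2)⟩
    intro H hH
    have hH1 : H ≤ 1 := hH.2.trans hHb1
    have hsub : Set.Icc H Hb ⊆ Set.Ioc (0:ℝ) Hb := fun s hs => ⟨lt_of_lt_of_le hH.1 hs.1, hs.2⟩
    have hF : ∀ s ∈ Set.Icc H Hb,
        HasDerivAt (fun s : ℝ => D * Real.log s) (D * s⁻¹) s := by
      intro s hs
      have hs0 : 0 < s := lt_of_lt_of_le hH.1 hs.1
      exact (Real.hasDerivAt_log (ne_of_gt hs0)).const_mul D
    have hbd : ∀ s ∈ Set.Icc H Hb,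
        |(g (s^(3-n)) (μ s) - Kc * s^(3-n)) / s^2| ≤ D * s⁻¹ := by
      intro s hs
      have hs0 : 0 < s := lt_of_lt_of_le hH.1 hs.1
      have h1 := hnb s (hsub hs)
      rw [Real.rpow_one] at h1
      rw [abs_div, abs_of_pos (by positivity : (0:ℝ) < s^2)]
      rw [div_le_iff₀ (by positivity : (0:ℝ) < s^2)]
      calc |g (s^(3-n)) (μ s) - Kc * s^(3-n)| ≤ D * s := h1
        _ = D * s⁻¹ * s^2 := by field_simp
    have hki := key_int hH.2 (fun s hs => hφd s (hsub hs)) hF hbd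
    have hlogHb : Real.log Hb ≤ 0 := Real.log_nonpos hHb0.le hHb1
    have hlogH : Real.log H ≤ 0 := Real.log_nonpos hH.1.le hH1
    have h2 : |μ H / H| ≤ (|μ Hb / Hb| + D) * (1 - Real.log H) := by
      have h5 := abs_sub_abs_le_abs_sub (μ H / H) (μ Hb / Hb)
      have h6 : |μ H / H - μ Hb / Hb| = |μ Hb / Hb - μ H / H| := abs_sub_comm _ _
      rw [h6] at h5
      have h7 : |μ H / H| ≤ |μ Hb / Hb| + (D * Real.log Hb - D * Real.log H) := by
        linarith [hki, h5]
      nlinarith [abs_nonneg (μ Hb / Hb), hD.le,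
        mul_nonneg (abs_nonneg (μ Hb / Hb)) (neg_nonneg.mpr hlogH)]
    have hμH : |μ H| = |μ H / H| * H := by
      rw [abs_div, abs_of_pos hH.1, div_mul_cancel₀]
      exact ne_of_gt hH.1
    have hw : (0:ℝ) ≤ 1 - Real.log H := by linarith
    calc |μ H| = |μ H / H| * H := hμH
      _ ≤ ((|μ Hb / Hb| + D) * (1 - Real.log H)) * H := mul_le_mul_of_nonneg_right h2 hH.1.le
      _ = (|μ Hb / Hb| + D) * (H * (1 - Real.log H)) := by ring
      _ ≤ (|μ Hb / Hb| + D + 1) * (H * (1 - Real.log H)) := by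
          nlinarith [mul_nonneg hH.1.le hw]
  · -- 2 < n : |μ| ≤ C H^(3-n)
    obtain ⟨C, hC, h⟩ := hall (3-n) h3n (by linarith) le_rfl
    exact ⟨Hb, C, hHb0, hHbε, hHb1, hC,
      fun h2 => by exact absurd (lt_trans h2 hn2) (lt_irrefl n),
      fun h2 => by rw [h2] at hn2; exact absurd hn2 (lt_irrefl 2),
      fun _ => h⟩
/-- Existence of the limit `β` of `v` at `0⁺` together with the rate `|v s - β| ≤ B·Φ s`. -/
lemma diff_asymp {Hc : ℝ} (hHc : 0 < Hc) (v Φ Φ' G' : ℝ → ℝ)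
    (hv : ∀ s ∈ Ioc (0:ℝ) Hc, HasDerivAt v (G' s) s)
    (hΦ : ∀ s ∈ Ioc (0:ℝ) Hc, HasDerivAt Φ (Φ' s) s)
    (hΦ'0 : ∀ s ∈ Ioc (0:ℝ) Hc, 0 ≤ Φ' s)
    (hΦ0 : ∀ s ∈ Ioc (0:ℝ) Hc, 0 ≤ Φ s)
    (hΦt : Tendsto Φ (𝓝[>] (0:ℝ)) (𝓝 0))
    (hbd : ∀ s ∈ Ioc (0:ℝ) Hc, |G' s| ≤ Φ' s * |v s|) :
    ∃ β B : ℝ, 0 ≤ B ∧ (∀ s ∈ Ioc (0:ℝ) Hc, |v s| ≤ B) ∧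
      (∀ s ∈ Ioc (0:ℝ) Hc, |v s - β| ≤ B * Φ s) := by
  set B : ℝ := |v Hc| * Real.exp (Φ Hc) with hBdef
  have hB0 : 0 ≤ B := mul_nonneg (abs_nonneg _) (Real.exp_pos _).le
  have hmemHc : Hc ∈ Ioc (0:ℝ) Hc := ⟨hHc, le_rfl⟩
  have hvB : ∀ s ∈ Ioc (0:ℝ) Hc, |v s| ≤ B := by
    intro s hs
    have hsub : Icc s Hc ⊆ Ioc (0:ℝ) Hc := fun u hu => ⟨lt_of_lt_of_le hs.1 hu.1, hu.2⟩
    have h := grw hs.2 (fun u hu => hv u (hsub hu)) (fun u hu => hΦ u (hsub hu))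
      (fun u hu => hbd u (hsub hu))
    calc |v s| ≤ |v Hc| * Real.exp (Φ Hc - Φ s) := h
      _ ≤ |v Hc| * Real.exp (Φ Hc) := by
          apply mul_le_mul_of_nonneg_left _ (abs_nonneg _)
          exact Real.exp_le_exp.2 (by linarith [hΦ0 s hs])
  -- v + B·Φ is monotone on Ioo 0 Hc
  have hFd : ∀ s ∈ Ioc (0:ℝ) Hc, HasDerivAt (fun u => v u + B * Φ u) (G' s + B * Φ' s) s :=
    fun s hs => (hv s hs).add ((hΦ s hs).const_mul B)
  have hmono : MonotoneOn (fun u => v u + B * Φ u) (Ioc (0:ℝ) Hc) := by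
    apply monotoneOn_of_deriv_nonneg (convex_Ioc _ _)
    · exact fun s hs => (hFd s hs).continuousAt.continuousWithinAt
    · intro s hs
      rw [interior_Ioc] at hs
      exact (hFd s (Ioo_subset_Ioc_self hs)).differentiableAt.differentiableWithinAt
    · intro s hs
      rw [interior_Ioc] at hs
      have hs' := Ioo_subset_Ioc_self hs
      rw [(hFd s hs').deriv]
      have h1 := hbd s hs'
      have h2 : Φ' s * |v s| ≤ Φ' s * B := mul_le_mul_of_nonneg_left (hvB s hs') (hΦ'0 s hs')
      have h3 := neg_abs_le (G' s)
      nlinarith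
  have hnon : (Ioo (0:ℝ) Hc).Nonempty := ⟨Hc/2, by constructor <;> linarith⟩
  have hbdd : BddBelow ((fun u => v u + B * Φ u) '' Ioo 0 Hc) := by
    refine ⟨-B, ?_⟩
    rintro x ⟨u, hu, rfl⟩
    have hu' : u ∈ Ioc (0:ℝ) Hc := Ioo_subset_Ioc_self hu
    have := hvB u hu'
    have := hΦ0 u hu'
    have := neg_abs_le (v u)
    show -B ≤ v u + B * Φ u
    nlinarith
  have hlim := MonotoneOn.tendsto_nhdsWithin_Ioo_right hnon
    (hmono.mono Ioo_subset_Ioc_self) hbdd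
  set β : ℝ := sInf ((fun u => v u + B * Φ u) '' Ioo 0 Hc) with hβdef
  have hβt : Tendsto v (𝓝[>] (0:ℝ)) (𝓝 β) := by
    have h1 : Tendsto (fun u => v u + B * Φ u - B * Φ u) (𝓝[>] (0:ℝ)) (𝓝 (β - B * 0)) :=
      hlim.sub ((hΦt.const_mul B))
    simpa using h1
  refine ⟨β, B, hB0, hvB, ?_⟩
  intro s hs
  have hev : ∀ᶠ s' in 𝓝[>] (0:ℝ), |v s - v s'| ≤ B * Φ s := by
    filter_upwards [Ioo_mem_nhdsGT_of_mem ⟨le_rfl, hs.1⟩] with s' hs'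
    have hs'm : s' ∈ Ioc (0:ℝ) Hc := ⟨hs'.1, hs'.2.le.trans hs.2⟩
    have hsub : Icc s' s ⊆ Ioc (0:ℝ) Hc :=
      fun u hu => ⟨lt_of_lt_of_le hs'.1 hu.1, hu.2.trans hs.2⟩
    have hki := key_int hs'.2.le (fun u hu => hv u (hsub hu))
      (fun u hu => (hΦ u (hsub hu)).const_mul B)
      (fun u hu => by
        have h1 := hbd u (hsub hu)
        have h2 : Φ' u * |v u| ≤ Φ' u * B :=
          mul_le_mul_of_nonneg_left (hvB u (hsub hu)) (hΦ'0 u (hsub hu))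
        calc |G' u| ≤ Φ' u * B := h1.trans h2
          _ = B * Φ' u := mul_comm _ _)
    have h3 : 0 ≤ B * Φ s' := mul_nonneg hB0 (hΦ0 s' hs'm)
    have h4 : |v s - v s'| ≤ B * Φ s - B * Φ s' := hki
    linarith
  have hten : Tendsto (fun s' => |v s - v s'|) (𝓝[>] (0:ℝ)) (𝓝 |v s - β|) :=
    (tendsto_const_nhds.sub hβt).abs
  exact le_of_tendsto hten hev
lemma final_bigO {Hc CT : ℝ} (hHc : 0 < Hc) (hCT : 0 ≤ CT) (μ₁ μ₂ Φ Φ' G' T : ℝ → ℝ)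
    (hv : ∀ s ∈ Ioc (0:ℝ) Hc, HasDerivAt (fun u => (μ₁ u - μ₂ u) / u) (G' s) s)
    (hΦ : ∀ s ∈ Ioc (0:ℝ) Hc, HasDerivAt Φ (Φ' s) s)
    (hΦ'0 : ∀ s ∈ Ioc (0:ℝ) Hc, 0 ≤ Φ' s)
    (hΦ0 : ∀ s ∈ Ioc (0:ℝ) Hc, 0 ≤ Φ s)
    (hΦt : Tendsto Φ (𝓝[>] (0:ℝ)) (𝓝 0))
    (hbd : ∀ s ∈ Ioc (0:ℝ) Hc, |G' s| ≤ Φ' s * |(μ₁ s - μ₂ s) / s|)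
    (hcomp : ∀ s ∈ Ioc (0:ℝ) Hc, Φ s ≤ CT * T s)
    (hT0 : ∀ s ∈ Ioc (0:ℝ) Hc, 0 ≤ T s) :
    ∃ β : ℝ, (fun H => μ₁ H - μ₂ H - β * H) =O[𝓝[>] (0:ℝ)] (fun H => H * T H) := by
  obtain ⟨β, B, hB0, hvB, hrate⟩ :=
    diff_asymp hHc (fun u => (μ₁ u - μ₂ u) / u) Φ Φ' G' hv hΦ hΦ'0 hΦ0 hΦt hbd
  refine ⟨β, isBigO_iff.2 ⟨B * CT, ?_⟩⟩
  filter_upwards [Ioc_mem_nhdsGT_of_mem ⟨le_rfl, hHc⟩] with H hH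
  have hH0 : (0:ℝ) < H := hH.1
  have h1 := hrate H hH
  have heq : μ₁ H - μ₂ H - β * H = H * ((μ₁ H - μ₂ H) / H - β) := by
    field_simp
  rw [Real.norm_eq_abs, Real.norm_eq_abs, heq, abs_mul, abs_of_pos hH0]
  have h2 : |(μ₁ H - μ₂ H) / H - β| ≤ B * (CT * T H) :=
    h1.trans (mul_le_mul_of_nonneg_left (hcomp H hH) hB0)
  have h3 : |H * T H| = H * T H := abs_of_nonneg (mul_nonneg hH0.le (hT0 H hH))
  calc H * |(μ₁ H - μ₂ H) / H - β| ≤ H * (B * (CT * T H)) :=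
        mul_le_mul_of_nonneg_left h2 hH0.le
    _ = B * CT * |H * T H| := by rw [h3]; ring
set_option maxHeartbeats 4000000 in
/-- Two solutions `μ₁, μ₂` of the first-order ODE
`H·μ'(H) − μ(H) = g(H^{3−n}, μ(H)) − (2/(3k³(3−n)))·H^{3−n}` on the unstable manifold,
each with `H^{−δ}·μ_j(H) → 0` as `H ↓ 0` for some `δ > 0`, differ by
`μ₁ − μ₂ = βH·(1+O(H))` (`0 < n < 2`), `βH·(1+O(−H ln H))` (`n = 2`),
`βH·(1+O(H^{3−n}))` (`2 < n < 3`) as `H ↓ 0`, for some `β ∈ ℝ`. -/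
theorem unstable_manifold_solution_difference (n k ε : ℝ) (hn : n ∈ Set.Ioo (0 : ℝ) 3)
    (hk : 0 < k) (hε : 0 < ε)
    (g : ℝ → ℝ → ℝ) (U : Set (ℝ × ℝ)) (hU : U ∈ 𝓝 ((0, 0) : ℝ × ℝ))
    (hanal : ∀ x ∈ U, AnalyticAt ℝ (fun y : ℝ × ℝ => g y.1 y.2) x)
    (hg0 : g 0 0 = 0) (hg1 : pd1 g 0 0 = 0) (hg2 : pd2 g 0 0 = 0)
    (μ₁ μ₂ : ℝ → ℝ)
    (hμreg₁ : ContDiffOn ℝ 1 μ₁ (Set.Ioo 0 ε)) (hμreg₂ : ContDiffOn ℝ 1 μ₂ (Set.Ioo 0 ε))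
    (hdom₁ : ∀ H ∈ Set.Ioo (0 : ℝ) ε, (H ^ (3 - n), μ₁ H) ∈ U)
    (hdom₂ : ∀ H ∈ Set.Ioo (0 : ℝ) ε, (H ^ (3 - n), μ₂ H) ∈ U)
    (hode₁ : ∀ H ∈ Set.Ioo (0 : ℝ) ε,
      H * deriv μ₁ H - μ₁ H
        = g (H ^ (3 - n)) (μ₁ H) - 2 / (3 * k ^ 3 * (3 - n)) * H ^ (3 - n))
    (hode₂ : ∀ H ∈ Set.Ioo (0 : ℝ) ε,
      H * deriv μ₂ H - μ₂ H
        = g (H ^ (3 - n)) (μ₂ H) - 2 / (3 * k ^ 3 * (3 - n)) * H ^ (3 - n))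
    (hδ₁ : ∃ δ > (0 : ℝ), Tendsto (fun H => H ^ (-δ) * μ₁ H) (𝓝[>] (0 : ℝ)) (𝓝 0))
    (hδ₂ : ∃ δ > (0 : ℝ), Tendsto (fun H => H ^ (-δ) * μ₂ H) (𝓝[>] (0 : ℝ)) (𝓝 0)) :
    ∃ β : ℝ,
      (n < 2 →
        (fun H => μ₁ H - μ₂ H - β * H) =O[𝓝[>] (0 : ℝ)] fun H => H * H) ∧
      (n = 2 →
        (fun H => μ₁ H - μ₂ H - β * H) =O[𝓝[>] (0 : ℝ)]
          fun H => H * -(H * Real.log H)) ∧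
      (2 < n →
        (fun H => μ₁ H - μ₂ H - β * H) =O[𝓝[>] (0 : ℝ)]
          fun H => H * H ^ (3 - n)) := by
  obtain ⟨hn0, hn3⟩ := hn
  have h3n : (0:ℝ) < 3 - n := by linarith
  obtain ⟨K, hK, r, hr, hquad, hdif⟩ := g_bounds g U hU hanal hg0 hg1 hg2
  obtain ⟨Hb₁, C₁, hHb₁0, hHb₁ε, hHb₁1, hC₁, hA₁, hB₁, hD₁⟩ :=
    mu_est n ε (2 / (3 * k ^ 3 * (3 - n))) hn0 hn3 hε g K r hK hr hquad μ₁ hμreg₁ hode₁ hδ₁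
  obtain ⟨Hb₂, C₂, hHb₂0, hHb₂ε, hHb₂1, hC₂, hA₂, hB₂, hD₂⟩ :=
    mu_est n ε (2 / (3 * k ^ 3 * (3 - n))) hn0 hn3 hε g K r hK hr hquad μ₂ hμreg₂ hode₂ hδ₂
  set CL : ℝ := 1 + C₁ + C₂ with hCLdef
  have hCL : 0 < CL := by positivity
  have tendrpow : ∀ p : ℝ, 0 < p → Tendsto (fun H : ℝ => H ^ p) (𝓝[>] (0:ℝ)) (𝓝 0) := by
    intro p hp
    have h := (Real.continuousAt_rpow_const 0 p (Or.inr hp.le)).tendsto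
    rw [Real.zero_rpow (ne_of_gt hp)] at h
    exact h.mono_left nhdsWithin_le_nhds
  have hvd : ∀ s ∈ Set.Ioo (0:ℝ) ε, HasDerivAt (fun u => (μ₁ u - μ₂ u) / u)
      ((g (s ^ (3-n)) (μ₁ s) - g (s ^ (3-n)) (μ₂ s)) / s ^ 2) s := by
    intro s hs
    have hd₁ : HasDerivAt μ₁ (deriv μ₁ s) s :=
      ((hμreg₁.differentiableOn one_ne_zero s hs).differentiableAt
        (isOpen_Ioo.mem_nhds hs)).hasDerivAt
    have hd₂ : HasDerivAt μ₂ (deriv μ₂ s) s :=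
      ((hμreg₂.differentiableOn one_ne_zero s hs).differentiableAt
        (isOpen_Ioo.mem_nhds hs)).hasDerivAt
    have h := (hd₁.sub hd₂).div (hasDerivAt_id s) (ne_of_gt hs.1)
    have e : ((deriv μ₁ s - deriv μ₂ s) * id s - (μ₁ s - μ₂ s) * 1) / id s ^ 2
        = (g (s ^ (3-n)) (μ₁ s) - g (s ^ (3-n)) (μ₂ s)) / s ^ 2 := by
      have e₁ := hode₁ s hs
      have e₂ := hode₂ s hs
      have e3 : (deriv μ₁ s - deriv μ₂ s) * id s - (μ₁ s - μ₂ s) * 1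
          = (s * deriv μ₁ s - μ₁ s) - (s * deriv μ₂ s - μ₂ s) := by
        simp only [id_eq]; ring
      rw [e3, e₁, e₂]
      simp only [id_eq]
      ring
    rw [Pi.sub_apply, e] at h
    exact h
  have tid : Tendsto (fun s : ℝ => s) (𝓝[>] (0:ℝ)) (𝓝 0) :=
    tendsto_id.mono_left nhdsWithin_le_nhds
  rcases lt_trichotomy n 2 with hn2 | hn2 | hn2
  · -- case n < 2
    have hμb₁ := hA₁ hn2
    have hμb₂ := hA₂ hn2
    have ev : ∀ᶠ H in 𝓝[>] (0:ℝ),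
        H ≤ Hb₁ ∧ H ≤ Hb₂ ∧ H ^ (3-n) ≤ r ∧ C₁ * H ≤ r ∧ C₂ * H ≤ r := by
      have e1 : ∀ᶠ H in 𝓝[>] (0:ℝ), H ^ (3-n) ≤ r :=
        (tendrpow _ h3n).eventually (eventually_le_nhds hr)
      have e2 : Set.Ioc (0:ℝ) (min Hb₁ Hb₂) ∈ 𝓝[>] (0:ℝ) :=
        Ioc_mem_nhdsGT_of_mem ⟨le_rfl, lt_min hHb₁0 hHb₂0⟩
      have e3 : ∀ᶠ H in 𝓝[>] (0:ℝ), C₁ * H ≤ r := by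
        have t := tid.const_mul C₁
        rw [mul_zero] at t
        exact t.eventually (eventually_le_nhds hr)
      have e4 : ∀ᶠ H in 𝓝[>] (0:ℝ), C₂ * H ≤ r := by
        have t := tid.const_mul C₂
        rw [mul_zero] at t
        exact t.eventually (eventually_le_nhds hr)
      filter_upwards [e1, e2, e3, e4] with H h1 h2 h3 h4
      exact ⟨h2.2.trans (min_le_left _ _), h2.2.trans (min_le_right _ _), h1, h3, h4⟩
    obtain ⟨Hc, hHc0', hHc⟩ := mem_nhdsGT_iff_exists_Ioc_subset.1 ev
    have hHc0 : (0:ℝ) < Hc := hHc0'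
    have hsubε : ∀ s ∈ Set.Ioc (0:ℝ) Hc, s ∈ Set.Ioo (0:ℝ) ε := fun s hs =>
      ⟨hs.1, lt_of_le_of_lt (hHc hs).1 hHb₁ε⟩
    have hΦt : Tendsto (fun s : ℝ => K * CL * s) (𝓝[>] (0:ℝ)) (𝓝 0) := by
      have t := tid.const_mul (K * CL)
      rwa [mul_zero] at t
    obtain ⟨β, hβ⟩ := final_bigO hHc0 (by positivity : (0:ℝ) ≤ K * CL) μ₁ μ₂
      (fun s => K * CL * s) (fun _ => K * CL)
      (fun s => (g (s ^ (3-n)) (μ₁ s) - g (s ^ (3-n)) (μ₂ s)) / s ^ 2)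
      (fun H => H)
      (fun s hs => hvd s (hsubε s hs))
      (fun s _ => by simpa using (hasDerivAt_id s).const_mul (K * CL))
      (fun s _ => by positivity)
      (fun s hs => mul_nonneg (by positivity) hs.1.le)
      hΦt
      (fun s hs => by
        have hs0 : (0:ℝ) < s := hs.1
        have hf := hHc hs
        have hs1 : s ≤ 1 := hf.1.trans hHb₁1
        have hϱ0 : 0 < s ^ (3-n) := Real.rpow_pos_of_pos hs0 _
        have hμ₁s : |μ₁ s| ≤ C₁ * s := hμb₁ s ⟨hs0, hf.1⟩
        have hμ₂s : |μ₂ s| ≤ C₂ * s := hμb₂ s ⟨hs0, hf.2.1⟩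
        have hμ₁r : |μ₁ s| ≤ r := hμ₁s.trans hf.2.2.2.1
        have hμ₂r : |μ₂ s| ≤ r := hμ₂s.trans hf.2.2.2.2
        have hg := hdif (s ^ (3-n)) (μ₁ s) (μ₂ s)
          (by rw [abs_of_pos hϱ0]; exact hf.2.2.1) hμ₁r hμ₂r
        have hϱs : s ^ (3-n) ≤ s := by
          nth_rewrite 2 [← Real.rpow_one s]
          exact Real.rpow_le_rpow_of_exponent_ge hs0 hs1 (by linarith)
        have hlam : s ^ (3-n) + |μ₁ s| + |μ₂ s| ≤ CL * s := by
          rw [hCLdef]; nlinarith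
        have hvabs : |μ₁ s - μ₂ s| = s * |(μ₁ s - μ₂ s) / s| := by
          rw [abs_div, abs_of_pos hs0]
          field_simp
        rw [abs_div, abs_of_pos (by positivity : (0:ℝ) < s ^ 2),
          div_le_iff₀ (by positivity : (0:ℝ) < s ^ 2)]
        calc |g (s ^ (3-n)) (μ₁ s) - g (s ^ (3-n)) (μ₂ s)|
            ≤ K * (|s ^ (3-n)| + |μ₁ s| + |μ₂ s|) * |μ₁ s - μ₂ s| := hg
          _ ≤ K * (CL * s) * |μ₁ s - μ₂ s| := by
              rw [abs_of_pos hϱ0]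
              exact mul_le_mul_of_nonneg_right
                (mul_le_mul_of_nonneg_left hlam hK.le) (abs_nonneg _)
          _ = K * (CL * s) * (s * |(μ₁ s - μ₂ s) / s|) := by rw [← hvabs]
          _ = K * CL * |(μ₁ s - μ₂ s) / s| * s ^ 2 := by ring)
      (fun s _ => le_rfl)
      (fun s hs => hs.1.le)
    exact ⟨β, fun _ => hβ,
      fun h2 => by rw [h2] at hn2; exact absurd hn2 (lt_irrefl 2),
      fun h2 => by exact absurd (hn2.trans h2) (lt_irrefl n)⟩
  · -- case n = 2
    have h3n1 : (3:ℝ) - n = 1 := by rw [hn2]; norm_num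
    have hμb₁ := hB₁ hn2
    have hμb₂ := hB₂ hn2
    have tlog : Tendsto (fun s : ℝ => s * (1 - Real.log s)) (𝓝[>] (0:ℝ)) (𝓝 0) := by
      have h := (continuous_id.sub Real.continuous_mul_log).tendsto 0
      replace h : Tendsto (fun s : ℝ => s - s * Real.log s) (𝓝 0) (𝓝 0) := by
        convert h using 2 <;> simp
      have h2 := h.mono_left (nhdsWithin_le_nhds : 𝓝[>] (0:ℝ) ≤ 𝓝 0)
      exact h2.congr (fun x => by ring)
    have ev : ∀ᶠ H in 𝓝[>] (0:ℝ),
        H ≤ Hb₁ ∧ H ≤ Hb₂ ∧ H ≤ Real.exp (-1) ∧ H ^ (3-n) ≤ r ∧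
          C₁ * (H * (1 - Real.log H)) ≤ r ∧ C₂ * (H * (1 - Real.log H)) ≤ r := by
      have e1 : ∀ᶠ H in 𝓝[>] (0:ℝ), H ^ (3-n) ≤ r :=
        (tendrpow _ h3n).eventually (eventually_le_nhds hr)
      have e2 : Set.Ioc (0:ℝ) (min (min Hb₁ Hb₂) (Real.exp (-1))) ∈ 𝓝[>] (0:ℝ) :=
        Ioc_mem_nhdsGT_of_mem ⟨le_rfl, lt_min (lt_min hHb₁0 hHb₂0) (Real.exp_pos _)⟩
      have e3 : ∀ᶠ H in 𝓝[>] (0:ℝ), C₁ * (H * (1 - Real.log H)) ≤ r := by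
        have t := tlog.const_mul C₁
        rw [mul_zero] at t
        exact t.eventually (eventually_le_nhds hr)
      have e4 : ∀ᶠ H in 𝓝[>] (0:ℝ), C₂ * (H * (1 - Real.log H)) ≤ r := by
        have t := tlog.const_mul C₂
        rw [mul_zero] at t
        exact t.eventually (eventually_le_nhds hr)
      filter_upwards [e1, e2, e3, e4] with H h1 h2 h3 h4
      exact ⟨h2.2.trans ((min_le_left _ _).trans (min_le_left _ _)),
        h2.2.trans ((min_le_left _ _).trans (min_le_right _ _)),
        h2.2.trans (min_le_right _ _), h1, h3, h4⟩
    obtain ⟨Hc, hHc0', hHc⟩ := mem_nhdsGT_iff_exists_Ioc_subset.1 ev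
    have hHc0 : (0:ℝ) < Hc := hHc0'
    have hsubε : ∀ s ∈ Set.Ioc (0:ℝ) Hc, s ∈ Set.Ioo (0:ℝ) ε := fun s hs =>
      ⟨hs.1, lt_of_le_of_lt (hHc hs).1 hHb₁ε⟩
    have hΦt : Tendsto (fun s : ℝ => K * CL * (2 * s - s * Real.log s))
        (𝓝[>] (0:ℝ)) (𝓝 0) := by
      have t2 := (tlog.add tid).const_mul (K * CL)
      rw [add_zero, mul_zero] at t2
      exact t2.congr (fun x => by ring)
    obtain ⟨β, hβ⟩ := final_bigO hHc0
      (by positivity : (0:ℝ) ≤ 3 * (K * CL)) μ₁ μ₂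
      (fun s => K * CL * (2 * s - s * Real.log s))
      (fun s => K * CL * (1 - Real.log s))
      (fun s => (g (s ^ (3-n)) (μ₁ s) - g (s ^ (3-n)) (μ₂ s)) / s ^ 2)
      (fun H => -(H * Real.log H))
      (fun s hs => hvd s (hsubε s hs))
      (fun s hs => by
        have hs0 : (0:ℝ) < s := hs.1
        have h := (((hasDerivAt_id s).const_mul (2:ℝ)).sub
          (Real.hasDerivAt_mul_log (ne_of_gt hs0))).const_mul (K * CL)
        have e : K * CL * (2 * 1 - (Real.log s + 1)) = K * CL * (1 - Real.log s) := by ring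
        rw [e] at h
        exact h)
      (fun s hs => by
        have hs1 : s ≤ 1 := ((hHc hs).2.2.1).trans (by
          calc Real.exp (-1) ≤ Real.exp 0 := Real.exp_le_exp.2 (by norm_num)
            _ = 1 := Real.exp_zero)
        have hlog : Real.log s ≤ 0 := Real.log_nonpos hs.1.le hs1
        have : (0:ℝ) ≤ 1 - Real.log s := by linarith
        positivity)
      (fun s hs => by
        have hs0 : (0:ℝ) < s := hs.1
        have hs1 : s ≤ 1 := ((hHc hs).2.2.1).trans (by
          calc Real.exp (-1) ≤ Real.exp 0 := Real.exp_le_exp.2 (by norm_num)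
            _ = 1 := Real.exp_zero)
        have hlog : Real.log s ≤ 0 := Real.log_nonpos hs0.le hs1
        have h1 : s * Real.log s ≤ 0 := mul_nonpos_of_nonneg_of_nonpos hs0.le hlog
        have h2 : (0:ℝ) ≤ 2 * s - s * Real.log s := by linarith
        positivity)
      hΦt
      (fun s hs => by
        have hs0 : (0:ℝ) < s := hs.1
        have hf := hHc hs
        have hs1 : s ≤ 1 := (hf.2.2.1).trans (by
          calc Real.exp (-1) ≤ Real.exp 0 := Real.exp_le_exp.2 (by norm_num)
            _ = 1 := Real.exp_zero)
        have hlog : Real.log s ≤ 0 := Real.log_nonpos hs0.le hs1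
        have hw : (1:ℝ) ≤ 1 - Real.log s := by linarith
        have hw0 : (0:ℝ) ≤ s * (1 - Real.log s) := by nlinarith
        have hϱ0 : 0 < s ^ (3-n) := Real.rpow_pos_of_pos hs0 _
        have hμ₁s : |μ₁ s| ≤ C₁ * (s * (1 - Real.log s)) := hμb₁ s ⟨hs0, hf.1⟩
        have hμ₂s : |μ₂ s| ≤ C₂ * (s * (1 - Real.log s)) := hμb₂ s ⟨hs0, hf.2.1⟩
        have hμ₁r : |μ₁ s| ≤ r := hμ₁s.trans hf.2.2.2.2.1
        have hμ₂r : |μ₂ s| ≤ r := hμ₂s.trans hf.2.2.2.2.2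
        have hg := hdif (s ^ (3-n)) (μ₁ s) (μ₂ s)
          (by rw [abs_of_pos hϱ0]; exact hf.2.2.2.1) hμ₁r hμ₂r
        have hϱeq : s ^ ((3:ℝ)-n) = s := by rw [h3n1, Real.rpow_one]
        have hϱs : s ^ (3-n) ≤ s * (1 - Real.log s) := by
          rw [hϱeq]; nlinarith
        have hlam : s ^ (3-n) + |μ₁ s| + |μ₂ s| ≤ CL * (s * (1 - Real.log s)) := by
          rw [hCLdef]; nlinarith
        have hvabs : |μ₁ s - μ₂ s| = s * |(μ₁ s - μ₂ s) / s| := by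
          rw [abs_div, abs_of_pos hs0]
          field_simp
        rw [abs_div, abs_of_pos (by positivity : (0:ℝ) < s ^ 2),
          div_le_iff₀ (by positivity : (0:ℝ) < s ^ 2)]
        calc |g (s ^ (3-n)) (μ₁ s) - g (s ^ (3-n)) (μ₂ s)|
            ≤ K * (|s ^ (3-n)| + |μ₁ s| + |μ₂ s|) * |μ₁ s - μ₂ s| := hg
          _ ≤ K * (CL * (s * (1 - Real.log s))) * |μ₁ s - μ₂ s| := by
              rw [abs_of_pos hϱ0]
              exact mul_le_mul_of_nonneg_right
                (mul_le_mul_of_nonneg_left hlam hK.le) (abs_nonneg _)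
          _ = K * (CL * (s * (1 - Real.log s))) * (s * |(μ₁ s - μ₂ s) / s|) := by
              rw [← hvabs]
          _ = K * CL * (1 - Real.log s) * |(μ₁ s - μ₂ s) / s| * s ^ 2 := by ring)
      (fun s hs => by
        have hs0 : (0:ℝ) < s := hs.1
        have hse : s ≤ Real.exp (-1) := (hHc hs).2.2.1
        have hlog1 : Real.log s ≤ -1 := by
          have := Real.log_le_log hs0 hse
          rwa [Real.log_exp] at this
        have key : (0:ℝ) ≤ -(s * (1 + Real.log s)) := by nlinarith
        show K * CL * (2 * s - s * Real.log s) ≤ 3 * (K * CL) * -(s * Real.log s)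
        nlinarith [mul_nonneg (mul_pos hK hCL).le key])
      (fun s hs => by
        have hs0 : (0:ℝ) < s := hs.1
        have hs1 : s ≤ 1 := ((hHc hs).2.2.1).trans (by
          calc Real.exp (-1) ≤ Real.exp 0 := Real.exp_le_exp.2 (by norm_num)
            _ = 1 := Real.exp_zero)
        have hlog : Real.log s ≤ 0 := Real.log_nonpos hs0.le hs1
        show (0:ℝ) ≤ -(s * Real.log s)
        nlinarith)
    exact ⟨β,
      fun h2 => by rw [hn2] at h2; exact absurd h2 (lt_irrefl 2),
      fun _ => hβ,
      fun h2 => by rw [hn2] at h2; exact absurd h2 (lt_irrefl 2)⟩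
  · -- case 2 < n
    have hμb₁ := hD₁ hn2
    have hμb₂ := hD₂ hn2
    have h3nne : (3:ℝ) - n ≠ 0 := ne_of_gt h3n
    have ev : ∀ᶠ H in 𝓝[>] (0:ℝ),
        H ≤ Hb₁ ∧ H ≤ Hb₂ ∧ H ^ (3-n) ≤ r ∧
          C₁ * H ^ (3-n) ≤ r ∧ C₂ * H ^ (3-n) ≤ r := by
      have e1 : ∀ᶠ H in 𝓝[>] (0:ℝ), H ^ (3-n) ≤ r :=
        (tendrpow _ h3n).eventually (eventually_le_nhds hr)
      have e2 : Set.Ioc (0:ℝ) (min Hb₁ Hb₂) ∈ 𝓝[>] (0:ℝ) :=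
        Ioc_mem_nhdsGT_of_mem ⟨le_rfl, lt_min hHb₁0 hHb₂0⟩
      have e3 : ∀ᶠ H in 𝓝[>] (0:ℝ), C₁ * H ^ (3-n) ≤ r := by
        have t := (tendrpow _ h3n).const_mul C₁
        rw [mul_zero] at t
        exact t.eventually (eventually_le_nhds hr)
      have e4 : ∀ᶠ H in 𝓝[>] (0:ℝ), C₂ * H ^ (3-n) ≤ r := by
        have t := (tendrpow _ h3n).const_mul C₂
        rw [mul_zero] at t
        exact t.eventually (eventually_le_nhds hr)
      filter_upwards [e1, e2, e3, e4] with H h1 h2 h3 h4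
      exact ⟨h2.2.trans (min_le_left _ _), h2.2.trans (min_le_right _ _), h1, h3, h4⟩
    obtain ⟨Hc, hHc0', hHc⟩ := mem_nhdsGT_iff_exists_Ioc_subset.1 ev
    have hHc0 : (0:ℝ) < Hc := hHc0'
    have hsubε : ∀ s ∈ Set.Ioc (0:ℝ) Hc, s ∈ Set.Ioo (0:ℝ) ε := fun s hs =>
      ⟨hs.1, lt_of_le_of_lt (hHc hs).1 hHb₁ε⟩
    have hΦt : Tendsto (fun s : ℝ => K * CL / (3-n) * s ^ (3-n)) (𝓝[>] (0:ℝ)) (𝓝 0) := by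
      have t := (tendrpow _ h3n).const_mul (K * CL / (3-n))
      rwa [mul_zero] at t
    obtain ⟨β, hβ⟩ := final_bigO hHc0
      (by positivity : (0:ℝ) ≤ K * CL / (3-n)) μ₁ μ₂
      (fun s => K * CL / (3-n) * s ^ (3-n))
      (fun s => K * CL * s ^ (2-n))
      (fun s => (g (s ^ (3-n)) (μ₁ s) - g (s ^ (3-n)) (μ₂ s)) / s ^ 2)
      (fun H => H ^ (3-n))
      (fun s hs => hvd s (hsubε s hs))
      (fun s hs => by
        have hs0 : (0:ℝ) < s := hs.1
        have h := (Real.hasDerivAt_rpow_const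
          (x := s) (p := 3-n) (Or.inl (ne_of_gt hs0))).const_mul (K * CL / (3-n))
        have e : K * CL / (3-n) * ((3-n) * s ^ (3-n-1)) = K * CL * s ^ (2-n) := by
          rw [show (3:ℝ)-n-1 = 2-n by ring]
          field_simp
        rw [e] at h
        exact h)
      (fun s hs => by
        have := Real.rpow_pos_of_pos hs.1 (2-n)
        positivity)
      (fun s hs => by
        have := Real.rpow_pos_of_pos hs.1 (3-n)
        positivity)
      hΦt
      (fun s hs => by
        have hs0 : (0:ℝ) < s := hs.1
        have hf := hHc hs
        have hϱ0 : 0 < s ^ (3-n) := Real.rpow_pos_of_pos hs0 _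
        have hμ₁s : |μ₁ s| ≤ C₁ * s ^ (3-n) := hμb₁ s ⟨hs0, hf.1⟩
        have hμ₂s : |μ₂ s| ≤ C₂ * s ^ (3-n) := hμb₂ s ⟨hs0, hf.2.1⟩
        have hμ₁r : |μ₁ s| ≤ r := hμ₁s.trans hf.2.2.2.1
        have hμ₂r : |μ₂ s| ≤ r := hμ₂s.trans hf.2.2.2.2
        have hg := hdif (s ^ (3-n)) (μ₁ s) (μ₂ s)
          (by rw [abs_of_pos hϱ0]; exact hf.2.2.1) hμ₁r hμ₂r
        have hlam : s ^ (3-n) + |μ₁ s| + |μ₂ s| ≤ CL * s ^ (3-n) := by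
          rw [hCLdef]; nlinarith
        have hvabs : |μ₁ s - μ₂ s| = s * |(μ₁ s - μ₂ s) / s| := by
          rw [abs_div, abs_of_pos hs0]
          field_simp
        have e2 : s ^ ((2:ℝ)-n) * s ^ 2 = s ^ ((3:ℝ)-n) * s := by
          rw [← Real.rpow_natCast s 2, ← Real.rpow_add hs0,
            show s ^ ((3:ℝ)-n) * s = s ^ ((3:ℝ)-n) * s ^ (1:ℝ) from by rw [Real.rpow_one],
            ← Real.rpow_add hs0]
          congr 1
          ring
        rw [abs_div, abs_of_pos (by positivity : (0:ℝ) < s ^ 2),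
          div_le_iff₀ (by positivity : (0:ℝ) < s ^ 2)]
        calc |g (s ^ (3-n)) (μ₁ s) - g (s ^ (3-n)) (μ₂ s)|
            ≤ K * (|s ^ (3-n)| + |μ₁ s| + |μ₂ s|) * |μ₁ s - μ₂ s| := hg
          _ ≤ K * (CL * s ^ (3-n)) * |μ₁ s - μ₂ s| := by
              rw [abs_of_pos hϱ0]
              exact mul_le_mul_of_nonneg_right
                (mul_le_mul_of_nonneg_left hlam hK.le) (abs_nonneg _)
          _ = K * (CL * s ^ (3-n)) * (s * |(μ₁ s - μ₂ s) / s|) := by rw [← hvabs]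
          _ = K * CL * |(μ₁ s - μ₂ s) / s| * (s ^ ((3:ℝ)-n) * s) := by ring
          _ = K * CL * |(μ₁ s - μ₂ s) / s| * (s ^ ((2:ℝ)-n) * s ^ 2) := by rw [← e2]
          _ = K * CL * s ^ (2-n) * |(μ₁ s - μ₂ s) / s| * s ^ 2 := by ring)
      (fun s _ => le_rfl)
      (fun s hs => (Real.rpow_pos_of_pos hs.1 (3-n)).le)
    exact ⟨β,
      fun h2 => by exact absurd (h2.trans hn2) (lt_irrefl n),
      fun h2 => by rw [h2] at hn2; exact absurd hn2 (lt_irrefl 2),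
      fun _ => hβ⟩
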